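/- Let p be a prime and M a finite non-abelian p-group whose center Z(M) is cyclic of order p², and let T be the unique subgroup of Z(M) of order p. Suppose the quotient M/T is elementary abelian. Then there exists a subgroup E of M of index p such that T ≤ E, Z(M) is not contained in E, every element of M is a product of an element of Z(M) and an element of E, and E is extraspecial with Z(E) = T. -/

import Mathlib

namespace SmallRep

open scoped commutatorElement

/-- Auxiliary: in a finite abelian group of exponent `p`, any nonidentity element `a` lies
outside some subgroup `W` of index `p`, and every element is `a ^ n * w` for some `w ∈ W`. -/
lemma exists_hyperplane {p : ℕ} (hp : p.Prime) {G : Type*} [CommGroup G] [Finite G]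
    (hexp : ∀ x : G, x ^ p = 1) (a : G) (ha : a ≠ 1) :
    ∃ W : Subgroup G, W.index = p ∧ a ∉ W ∧ ∀ g : G, ∃ n : ℕ, (a ^ n)⁻¹ * g ∈ W := by
  haveI : Fact p.Prime := ⟨hp⟩
  obtain ⟨m⟩ : Nonempty (Module (ZMod p) (Additive G)) :=
    ⟨AddCommGroup.zmodModule (by
      intro x
      show Additive.ofMul ((Additive.toMul x) ^ p) = 0
      rw [hexp]; rfl)⟩
  letI := m
  set a' : Additive G := Additive.ofMul a with ha'def
  have ha' : a' ≠ 0 := ha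
  obtain ⟨W', hW'⟩ := Submodule.exists_isCompl (Submodule.span (ZMod p) {a'})
  have hcard_span : Nat.card ↥(Submodule.span (ZMod p) {a'}) = p := by
    rw [← Nat.card_congr (LinearEquiv.toSpanNonzeroSingleton (ZMod p) (Additive G) a' ha').toEquiv]
    exact Nat.card_zmod p
  have hcardA : Nat.card (Additive G) = p * Nat.card ↥W' := by
    rw [← Nat.card_congr (Submodule.prodEquivOfIsCompl _ _ hW').toEquiv,
      Nat.card_prod, hcard_span]
  refine ⟨AddSubgroup.toSubgroup' W'.toAddSubgroup, ?_, ?_, ?_⟩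
  · have h1 := Subgroup.card_mul_index (AddSubgroup.toSubgroup' (G := G) W'.toAddSubgroup)
    have hcardW : Nat.card (AddSubgroup.toSubgroup' (G := G) W'.toAddSubgroup) = Nat.card ↥W' :=
      rfl
    have h2 : Nat.card G = Nat.card (Additive G) := rfl
    rw [hcardW, h2, hcardA, mul_comm] at h1
    exact Nat.eq_of_mul_eq_mul_right Nat.card_pos h1
  · intro h
    have : a' ∈ Submodule.span (ZMod p) {a'} ⊓ W' :=
      ⟨Submodule.mem_span_singleton_self a', h⟩
    rw [hW'.inf_eq_bot] at this
    exact ha' this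
  · intro g
    have hmem : Additive.ofMul g ∈ Submodule.span (ZMod p) {a'} ⊔ W' := by
      rw [hW'.sup_eq_top]; trivial
    obtain ⟨s, hs, w, hw, hsw⟩ := Submodule.mem_sup.mp hmem
    obtain ⟨k, hk⟩ := Submodule.mem_span_singleton.mp hs
    have hs' : s = Additive.ofMul (a ^ k.val) := by
      have hkv : ((k.val : ℕ) : ZMod p) = k := ZMod.natCast_rightInverse k
      have hks : k • a' = k.val • a' := by
        conv_lhs => rw [← hkv, Nat.cast_smul_eq_nsmul]
      rw [← hk, hks, ← ofMul_pow]
    refine ⟨k.val, ?_⟩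
    show Additive.ofMul ((a ^ k.val)⁻¹ * g) ∈ W'
    have h3 : a ^ k.val * Additive.toMul w = g := by
      rw [hs'] at hsw
      exact congrArg Additive.toMul hsw
    have h4 : (a ^ k.val)⁻¹ * g = Additive.toMul w := by rw [← h3]; group
    rw [h4]
    exact hw

/-- A finite `p`-group is extraspecial if its center equals its commutator subgroup,
has order `p`, and the central quotient is a nontrivial elementary abelian `p`-group. -/
def IsExtraspecial (p : ℕ) (E : Type*) [Group E] : Prop :=
  Subgroup.center E = commutator E ∧ Nat.card (Subgroup.center E) = p ∧
  Nontrivial (E ⧸ Subgroup.center E) ∧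
  (∀ x y : E ⧸ Subgroup.center E, x * y = y * x) ∧
  (∀ x : E ⧸ Subgroup.center E, x ^ p = 1)

/-- Let `M` be a finite non-abelian `p`-group whose center is cyclic of order `p²`, let `T`
be the unique subgroup of the center of order `p`, and suppose `M/T` is elementary abelian.
Then `M` has a subgroup `E` of index `p` containing `T` but not the center, with
`M = Z(M)·E`, which is extraspecial with center `T`. -/
theorem exists_extraspecial_complement
    (p : ℕ) (hp : p.Prime) (M : Type*) [Group M] [Finite M]
    (hpM : IsPGroup p M) (hnab : ∃ a b : M, a * b ≠ b * a)
    (hcyc : IsCyclic (Subgroup.center M))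
    (hord : Nat.card (Subgroup.center M) = p ^ 2)
    (T : Subgroup M) [T.Normal] (hTle : T ≤ Subgroup.center M)
    (hTcard : Nat.card T = p)
    (hTuniq : ∀ T' : Subgroup M, T' ≤ Subgroup.center M → Nat.card T' = p → T' = T)
    (habelian : ∀ x y : M ⧸ T, x * y = y * x)
    (hexp : ∀ x : M ⧸ T, x ^ p = 1) :
    ∃ E : Subgroup M, E.index = p ∧ T ≤ E ∧ ¬ Subgroup.center M ≤ E ∧
      (∀ m : M, ∃ c ∈ Subgroup.center M, ∃ e ∈ E, m = c * e) ∧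
      IsExtraspecial p E ∧ (Subgroup.center E).map E.subtype = T := by
  haveI : Fact p.Prime := ⟨hp⟩
  have hp1 : 1 < p := hp.one_lt
  -- commutator M ≤ T
  have hcommM : commutator M ≤ T := by
    rw [commutator_def, Subgroup.commutator_le]
    intro g _ h _
    have h1 : ((⁅g, h⁆ : M) : M ⧸ T) = 1 := by
      have h0 : ((⁅g, h⁆ : M) : M ⧸ T) = ⁅(g : M ⧸ T), (h : M ⧸ T)⁆ := rfl
      rw [h0, commutatorElement_eq_one_iff_mul_comm]
      exact habelian _ _
    exact (QuotientGroup.eq_one_iff _).mp h1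
  -- generator of the center
  obtain ⟨zc, hzc⟩ := hcyc.exists_generator
  set z : M := (zc : M) with hzdef
  have hzcen : z ∈ Subgroup.center M := zc.2
  -- z ∉ T
  have hzT : z ∉ T := by
    intro hzt
    have hle : Subgroup.center M ≤ T := by
      intro x hx
      obtain ⟨k, hk⟩ := hzc ⟨x, hx⟩
      have : z ^ k = x := congrArg Subtype.val hk
      rw [← this]
      exact T.zpow_mem hzt k
    have := Subgroup.card_le_of_le hle
    rw [hord, hTcard] at this
    nlinarith
  -- the hyperplane
  letI : CommGroup (M ⧸ T) :=
    { (inferInstance : Group (M ⧸ T)) with mul_comm := habelian }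
  have hz1 : ((z : M) : M ⧸ T) ≠ 1 := fun h => hzT ((QuotientGroup.eq_one_iff _).mp h)
  obtain ⟨W, hWindex, haW, hWdec⟩ := exists_hyperplane hp hexp ((z : M) : M ⧸ T) hz1
  set E : Subgroup M := W.comap (QuotientGroup.mk' T) with hEdef
  have hEindex : E.index = p := by
    rw [hEdef, Subgroup.index_comap_of_surjective W (QuotientGroup.mk'_surjective T)]
    exact hWindex
  have hTE : T ≤ E := by
    intro t ht
    show ((t : M ⧸ T)) ∈ W
    have h1 : ((t : M) : M ⧸ T) = 1 := (QuotientGroup.eq_one_iff _).mpr ht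
    rw [h1]
    exact W.one_mem
  have hzE : z ∉ E := haW
  have hnle : ¬ Subgroup.center M ≤ E := fun h => hzE (h hzcen)
  -- decomposition M = Z(M) * E
  have hdecomp : ∀ m : M, ∃ c ∈ Subgroup.center M, ∃ e ∈ E, m = c * e := by
    intro m
    obtain ⟨n, hn⟩ := hWdec ((m : M) : M ⧸ T)
    refine ⟨z ^ n, Subgroup.pow_mem _ hzcen _, (z ^ n)⁻¹ * m, ?_, by group⟩
    show ((((z ^ n)⁻¹ * m : M)) : M ⧸ T) ∈ W
    have h1 : ((((z ^ n)⁻¹ * m : M)) : M ⧸ T)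
        = (((z : M) : M ⧸ T) ^ n)⁻¹ * ((m : M) : M ⧸ T) := rfl
    rw [h1]
    exact hn
  -- center M ⊓ E = T
  have hinter : Subgroup.center M ⊓ E = T := by
    have h1 : T ≤ Subgroup.center M ⊓ E := le_inf hTle hTE
    have hdvd : Nat.card (Subgroup.center M ⊓ E : Subgroup M) ∣ p ^ 2 := by
      rw [← hord]; exact Subgroup.card_dvd_of_le inf_le_left
    obtain ⟨i, hi2, hcardeq⟩ := (Nat.dvd_prime_pow hp).mp hdvd
    interval_cases i
    · exfalso
      have := Subgroup.card_le_of_le h1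
      rw [hTcard, hcardeq] at this
      simp at this; omega
    · rw [pow_one] at hcardeq
      exact hTuniq _ inf_le_left hcardeq
    · exfalso
      have heq : Subgroup.center M ⊓ E = Subgroup.center M := by
        apply Subgroup.eq_of_le_of_card_ge inf_le_left
        rw [hord, hcardeq]
      apply hnle
      rw [← heq]
      exact inf_le_right
  -- elements of E that are central in M are central in E
  have hmemcen : ∀ g : E, (g : M) ∈ Subgroup.center M → g ∈ Subgroup.center E := by
    intro g hg
    rw [Subgroup.mem_center_iff]
    intro h
    ext
    exact (Subgroup.mem_center_iff.mp hg (h : M))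
  -- map of center E = T
  have hK : (Subgroup.center E).map E.subtype = Subgroup.center M ⊓ E := by
    ext x
    constructor
    · rintro ⟨e, he, rfl⟩
      refine ⟨?_, e.2⟩
      show E.subtype e ∈ Subgroup.center M
      rw [Subgroup.mem_center_iff]
      intro m
      obtain ⟨c, hc, w, hw, rfl⟩ := hdecomp m
      have hce : ∀ g : M, g * c = c * g := Subgroup.mem_center_iff.mp hc
      have hwe : (⟨w, hw⟩ : E) * e = e * ⟨w, hw⟩ := Subgroup.mem_center_iff.mp he _
      have hwe' : w * (e : M) = (e : M) * w := congrArg Subtype.val hwe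
      show c * w * (E.subtype e) = (E.subtype e) * (c * w)
      calc c * w * (e : M) = c * ((e : M) * w) := by rw [mul_assoc, hwe']
        _ = c * (e : M) * w := by rw [mul_assoc]
        _ = (e : M) * c * w := by rw [hce]
        _ = (e : M) * (c * w) := by rw [mul_assoc]
    · rintro ⟨hxc, hxE⟩
      exact ⟨⟨x, hxE⟩, hmemcen _ hxc, rfl⟩
  have hZE : (Subgroup.center E).map E.subtype = T := by rw [hK, hinter]
  -- card of center E
  have hcardZE : Nat.card (Subgroup.center E) = p := by
    have h1 := Nat.card_congr
      (Subgroup.equivMapOfInjective (Subgroup.center E) E.subtype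
        (Subgroup.subtype_injective E)).toEquiv
    rw [h1, hZE, hTcard]
  -- noncommuting elements of E
  have hEnab : ∃ e f : E, e * f ≠ f * e := by
    by_contra hcon
    push_neg at hcon
    obtain ⟨x, y, hxy⟩ := hnab
    apply hxy
    obtain ⟨c, hc, e, he, rfl⟩ := hdecomp x
    obtain ⟨d, hd, f, hf, rfl⟩ := hdecomp y
    have hef : e * f = f * e :=
      congrArg Subtype.val (hcon ⟨e, he⟩ ⟨f, hf⟩)
    have hc' : ∀ g : M, g * c = c * g := Subgroup.mem_center_iff.mp hc
    have hd' : ∀ g : M, g * d = d * g := Subgroup.mem_center_iff.mp hd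
    calc c * e * (d * f) = c * d * (e * f) := by
          rw [mul_assoc, mul_assoc, ← mul_assoc e d f, hd' e, mul_assoc]
      _ = d * c * (f * e) := by rw [hc' d, hef]
      _ = d * f * (c * e) := by
          rw [mul_assoc, mul_assoc, ← mul_assoc c f e, ← hc' f, mul_assoc]
  -- commutator E ≤ center E
  have hcomle : commutator E ≤ Subgroup.center E := by
    rw [commutator_def, Subgroup.commutator_le]
    intro e _ f _
    apply hmemcen
    have h1 : (↑⁅e, f⁆ : M) = ⁅(e : M), (f : M)⁆ := rfl
    have h2 : ⁅(e : M), (f : M)⁆ ∈ T :=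
      hcommM (Subgroup.commutator_mem_commutator (Subgroup.mem_top _) (Subgroup.mem_top _))
    rw [h1]
    exact hTle h2
  -- commutator E = center E
  have hcomeq : Subgroup.center E = commutator E := by
    obtain ⟨e, f, hef⟩ := hEnab
    have hnt : ⁅e, f⁆ ∈ commutator E :=
      Subgroup.commutator_mem_commutator (Subgroup.mem_top _) (Subgroup.mem_top _)
    have hne1 : ⁅e, f⁆ ≠ 1 := fun h =>
      hef (commutatorElement_eq_one_iff_mul_comm.mp h)
    have hdvd : Nat.card (commutator E) ∣ p := by
      rw [← hcardZE]; exact Subgroup.card_dvd_of_le hcomle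
    have hne : Nat.card (commutator E) ≠ 1 := by
      intro h
      have hbot : (commutator E) = ⊥ := Subgroup.eq_bot_of_card_eq _ h
      rw [hbot] at hnt
      exact hne1 hnt
    have hcardcom : Nat.card (commutator E) = p :=
      (hp.eq_one_or_self_of_dvd _ hdvd).resolve_left hne
    symm
    apply Subgroup.eq_of_le_of_card_ge hcomle
    rw [hcardZE, hcardcom]
  -- nontrivial quotient
  have hnontriv : Nontrivial (E ⧸ Subgroup.center E) := by
    obtain ⟨e, f, hef⟩ := hEnab
    refine ⟨⟨(f : E ⧸ Subgroup.center E), 1, ?_⟩⟩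
    intro h
    have hfc : f ∈ Subgroup.center E := (QuotientGroup.eq_one_iff _).mp h
    exact hef (Subgroup.mem_center_iff.mp hfc e)
  -- quotient is abelian
  have hqab : ∀ x y : E ⧸ Subgroup.center E, x * y = y * x := by
    intro x y
    induction x using QuotientGroup.induction_on with
    | H e =>
    induction y using QuotientGroup.induction_on with
    | H f =>
    show ((e * f : E) : E ⧸ Subgroup.center E) = ((f * e : E) : _)
    rw [QuotientGroup.eq]
    have h1 : (e * f)⁻¹ * (f * e) = ⁅f⁻¹, e⁻¹⁆ := by group
    rw [h1]
    exact hcomle (Subgroup.commutator_mem_commutator (Subgroup.mem_top _) (Subgroup.mem_top _))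
  -- quotient has exponent p
  have hqexp : ∀ x : E ⧸ Subgroup.center E, x ^ p = 1 := by
    intro x
    induction x using QuotientGroup.induction_on with
    | H e =>
    show ((e ^ p : E) : E ⧸ Subgroup.center E) = 1
    rw [QuotientGroup.eq_one_iff]
    apply hmemcen
    have h1 : ((e ^ p : E) : M) = (e : M) ^ p := rfl
    have h2 : (e : M) ^ p ∈ T := by
      rw [← QuotientGroup.eq_one_iff (G := M) (N := T)]
      have h0 : (((e : M) ^ p : M) : M ⧸ T) = (((e : M) : M ⧸ T)) ^ p := rfl
      rw [h0]
      exact hexp _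
    rw [h1]
    exact hTle h2
  exact ⟨E, hEindex, hTE, hnle, hdecomp, ⟨hcomeq, hcardZE, hnontriv, hqab, hqexp⟩, hZE⟩

end SmallRep
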